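/- The prevision of the conjunction (B|A) ∧ (B|Aᶜ) is the product of the two conditional probabilities: for every probability measure μ on a measurable space Ω and all measurable sets A, B with μ(A) > 0 and μ(Aᶜ) > 0, setting x = P(B|A) and y = P(B|Aᶜ), one has ∫ (y·1_{A∩B} + x·1_{Aᶜ∩B}) dμ = x·y, and consequently ∫ (1 − (y·1_{A∩B} + x·1_{Aᶜ∩B})) dμ = 1 − x·y. -/

import Mathlib

open MeasureTheory

/-- Conditional probability `P(E|H) = μ(E ∩ H) / μ(H)` as a real number. -/
noncomputable def condP {Ω : Type*} [MeasurableSpace Ω] (μ : Measure Ω) (E H : Set Ω) : ℝ :=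
  (μ (E ∩ H)).toReal / (μ H).toReal

/-- The prevision of the conjunction `(B|A) ∧ (B|Aᶜ)` is the product of the two
conditional probabilities: with `x = P(B|A)` and `y = P(B|Aᶜ)`,
`∫ (y·1_{A∩B} + x·1_{Aᶜ∩B}) dμ = x·y`, and hence the prevision of its negation is `1 − x·y`. -/
theorem prevision_conjunction_B_given_A_and_B_given_not_A
    {Ω : Type*} [MeasurableSpace Ω] (μ : Measure Ω) [IsProbabilityMeasure μ]
    (A B : Set Ω) (hA : MeasurableSet A) (hB : MeasurableSet B)
    (hApos : 0 < μ A) (hAcpos : 0 < μ Aᶜ)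
    (x y : ℝ) (hx : x = condP μ B A) (hy : y = condP μ B Aᶜ) :
    (∫ ω, (y * (A ∩ B).indicator (1 : Ω → ℝ) ω
        + x * (Aᶜ ∩ B).indicator (1 : Ω → ℝ) ω) ∂μ) = x * y ∧
    (∫ ω, (1 - (y * (A ∩ B).indicator (1 : Ω → ℝ) ω
        + x * (Aᶜ ∩ B).indicator (1 : Ω → ℝ) ω)) ∂μ) = 1 - x * y := by
  have h1 : MeasurableSet (A ∩ B) := hA.inter hB
  have h2 : MeasurableSet (Aᶜ ∩ B) := hA.compl.inter hB
  have i1 : Integrable ((A ∩ B).indicator (1 : Ω → ℝ)) μ :=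
    (integrable_const (1 : ℝ)).indicator h1
  have i2 : Integrable ((Aᶜ ∩ B).indicator (1 : Ω → ℝ)) μ :=
    (integrable_const (1 : ℝ)).indicator h2
  have hAne : (μ A).toReal ≠ 0 := by
    simp [ENNReal.toReal_ne_zero, hApos.ne', (measure_lt_top μ A).ne]
  have hAcne : (μ Aᶜ).toReal ≠ 0 := by
    simp [ENNReal.toReal_ne_zero, hAcpos.ne', (measure_lt_top μ Aᶜ).ne]
  have hxA : x * (μ A).toReal = (μ (B ∩ A)).toReal := by
    rw [hx, condP, div_mul_cancel₀ _ hAne]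
  have hyA : y * (μ Aᶜ).toReal = (μ (B ∩ Aᶜ)).toReal := by
    rw [hy, condP, div_mul_cancel₀ _ hAcne]
  have hsum : (μ A).toReal + (μ Aᶜ).toReal = 1 := by
    rw [← ENNReal.toReal_add (measure_lt_top μ A).ne (measure_lt_top μ Aᶜ).ne,
      measure_add_measure_compl hA]
    simp
  have key : (∫ ω, (y * (A ∩ B).indicator (1 : Ω → ℝ) ω
      + x * (Aᶜ ∩ B).indicator (1 : Ω → ℝ) ω) ∂μ) = x * y := by
    rw [integral_add (i1.const_mul y) (i2.const_mul x), integral_const_mul, integral_const_mul,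
      integral_indicator_one h1, integral_indicator_one h2]
    have e1 : (μ (A ∩ B)).toReal = x * (μ A).toReal := by
      rw [hxA, Set.inter_comm]
    have e2 : (μ (Aᶜ ∩ B)).toReal = y * (μ Aᶜ).toReal := by
      rw [hyA, Set.inter_comm]
    rw [Measure.real, Measure.real, e1, e2]
    linear_combination x * y * hsum
  refine ⟨key, ?_⟩
  have hint : Integrable (fun ω => y * (A ∩ B).indicator (1 : Ω → ℝ) ω
      + x * (Aᶜ ∩ B).indicator (1 : Ω → ℝ) ω) μ := (i1.const_mul y).add (i2.const_mul x)
  rw [integral_sub (integrable_const 1) hint, key]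
  simp
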